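/- Let k_0 < 0 and d_i, d_j > 0. Then R_{ij}(k_0) := 1/d_i² + 1/d_j² − (2/(k_0 d_i d_j))·(1/(s_{k_0}(d_i)·s_{k_0}(d_j)) − ct_{k_0}(d_i)·ct_{k_0}(d_j)) is nonnegative, where s_{k_0}(r) = sinh(√(−k_0)·r)/√(−k_0) and ct_{k_0}(r) = √(−k_0)·coth(√(−k_0)·r). -/

import Mathlib

open Real

lemma aux1 (x : ℝ) (hx : 0 ≤ x) : Real.sinh x ≤ x * Real.cosh x := by
  have hmono : MonotoneOn (fun t : ℝ => t * Real.cosh t - Real.sinh t) (Set.Ici 0) := by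
    have hderiv : ∀ t : ℝ, HasDerivAt (fun t : ℝ => t * Real.cosh t - Real.sinh t)
        (t * Real.sinh t) t := by
      intro t
      have h1 := (hasDerivAt_id t).mul (Real.hasDerivAt_cosh t)
      have h2 := h1.sub (Real.hasDerivAt_sinh t)
      refine h2.congr_deriv ?_
      simp [id, mul_comm]
    apply monotoneOn_of_deriv_nonneg (convex_Ici 0)
    · exact (Continuous.sub (continuous_id.mul Real.continuous_cosh) Real.continuous_sinh).continuousOn
    · intro t ht
      exact (hderiv t).differentiableAt.differentiableWithinAt
    · intro t ht
      simp only [interior_Ici, Set.mem_Ioi] at ht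
      rw [(hderiv t).deriv]
      exact mul_nonneg ht.le (Real.sinh_nonneg_iff.mpr ht.le)
  have := hmono (Set.self_mem_Ici) (Set.mem_Ici.mpr hx) hx
  simpa using this

lemma aux2 (x y : ℝ) (hx : 0 ≤ x) (hxy : x ≤ y) : y * Real.sinh x ≤ x * Real.sinh y := by
  have hmono : MonotoneOn (fun t : ℝ => x * Real.sinh t - t * Real.sinh x) (Set.Ici x) := by
    have hderiv : ∀ t : ℝ, HasDerivAt (fun t : ℝ => x * Real.sinh t - t * Real.sinh x)
        (x * Real.cosh t - Real.sinh x) t := by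
      intro t
      have := ((Real.hasDerivAt_sinh t).const_mul x).sub
        ((hasDerivAt_id t).mul_const (Real.sinh x))
      refine this.congr_deriv ?_
      simp
    apply monotoneOn_of_deriv_nonneg (convex_Ici x)
    · exact (Continuous.sub (Real.continuous_sinh.const_smul x)
        (continuous_id.mul continuous_const)).continuousOn
    · intro t ht
      exact (hderiv t).differentiableAt.differentiableWithinAt
    · intro t ht
      simp only [interior_Ici, Set.mem_Ioi] at ht
      rw [(hderiv t).deriv]
      have hc : Real.cosh x ≤ Real.cosh t := by
        rw [Real.cosh_le_cosh]
        rw [abs_of_nonneg hx, abs_of_nonneg (hx.trans ht.le)]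
        exact ht.le
      have := aux1 x hx
      nlinarith [Real.cosh_pos x]
  have := hmono (Set.self_mem_Ici) (Set.mem_Ici.mpr hxy) hxy
  simpa using this

lemma key (a b : ℝ) (ha : 0 < a) (hb : 0 < b) :
    2 * a * b * (Real.cosh a * Real.cosh b - 1) ≤ (a ^ 2 + b ^ 2) * (Real.sinh a * Real.sinh b) := by
  wlog hab : b ≤ a generalizing a b
  · have := this b a hb ha (le_of_not_ge hab)
    nlinarith [this]
  set m := (a - b) / 2 with hm
  set s := (a + b) / 2 with hs
  have hm0 : 0 ≤ m := by rw [hm]; linarith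
  have hs0 : 0 < s := by positivity
  have hms : m ≤ s := by simp [hm, hs]; nlinarith
  have h2 := aux2 m s hm0 hms
  have hsm : 0 ≤ Real.sinh m := Real.sinh_nonneg_iff.mpr hm0
  have hss : 0 ≤ Real.sinh s := Real.sinh_nonneg_iff.mpr hs0.le
  have hsq : (s * Real.sinh m) ^ 2 ≤ (m * Real.sinh s) ^ 2 := by
    have h1 : 0 ≤ s * Real.sinh m := mul_nonneg hs0.le hsm
    nlinarith
  have ha' : a = s + m := by rw [hm, hs]; ring
  have hb' : b = s - m := by rw [hm, hs]; ring
  have e1 : (Real.cosh s * Real.cosh m + Real.sinh s * Real.sinh m) *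
      (Real.cosh s * Real.cosh m - Real.sinh s * Real.sinh m) - 1
      = Real.sinh s ^ 2 + Real.sinh m ^ 2 := by
    linear_combination Real.cosh m ^ 2 * Real.cosh_sq s + (Real.sinh s ^ 2 + 1) * Real.cosh_sq m
  have e2 : (Real.sinh s * Real.cosh m + Real.cosh s * Real.sinh m) *
      (Real.sinh s * Real.cosh m - Real.cosh s * Real.sinh m)
      = Real.sinh s ^ 2 - Real.sinh m ^ 2 := by
    linear_combination Real.sinh s ^ 2 * Real.cosh_sq m - Real.sinh m ^ 2 * Real.cosh_sq s
  rw [ha', hb', Real.cosh_add, Real.cosh_sub, Real.sinh_add, Real.sinh_sub, e1, e2]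
  nlinarith [hsq]

theorem R_ij_nonneg (k₀ di dj : ℝ) (hk : k₀ < 0) (hdi : 0 < di) (hdj : 0 < dj) :
    0 ≤ 1 / di ^ 2 + 1 / dj ^ 2 - (2 / (k₀ * di * dj)) *
      (1 / ((Real.sinh (Real.sqrt (-k₀) * di) / Real.sqrt (-k₀)) *
             (Real.sinh (Real.sqrt (-k₀) * dj) / Real.sqrt (-k₀)))
        - (Real.sqrt (-k₀) * (Real.cosh (Real.sqrt (-k₀) * di) / Real.sinh (Real.sqrt (-k₀) * di))) *
          (Real.sqrt (-k₀) * (Real.cosh (Real.sqrt (-k₀) * dj) / Real.sinh (Real.sqrt (-k₀) * dj)))) := by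
  set c := Real.sqrt (-k₀) with hc
  have hc0 : 0 < c := Real.sqrt_pos.mpr (by linarith)
  have hk2 : k₀ = -c ^ 2 := by
    rw [hc, Real.sq_sqrt (by linarith : (0:ℝ) ≤ -k₀)]; ring
  set a := c * di with haa
  set b := c * dj with hbb
  have ha : 0 < a := mul_pos hc0 hdi
  have hb : 0 < b := mul_pos hc0 hdj
  have hsa : 0 < Real.sinh a := Real.sinh_pos_iff.mpr ha
  have hsb : 0 < Real.sinh b := Real.sinh_pos_iff.mpr hb
  have hkey := key a b ha hb
  have hid : 1 / di ^ 2 + 1 / dj ^ 2 - (2 / (k₀ * di * dj)) *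
      (1 / ((Real.sinh a / c) * (Real.sinh b / c))
        - (c * (Real.cosh a / Real.sinh a)) * (c * (Real.cosh b / Real.sinh b)))
      = c ^ 2 * (((a ^ 2 + b ^ 2) * (Real.sinh a * Real.sinh b)
          - 2 * a * b * (Real.cosh a * Real.cosh b - 1))
        / (a ^ 2 * b ^ 2 * (Real.sinh a * Real.sinh b))) := by
    rw [hk2, haa, hbb]
    field_simp
    ring
  rw [hid]
  apply mul_nonneg (by positivity)
  apply div_nonneg (by linarith) (by positivity)
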